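/- Let C• be a bounded cochain complex of flat modules over a commutative ring R such that all cohomology modules H^j(C•) are flat. Then for every R-module M and every i, the natural map H^i(C•) ⊗_R M → H^i(C• ⊗_R M) is an isomorphism. -/

import Mathlib

open TensorProduct

namespace Statement4Aux

open LinearMap

variable {R : Type*} [CommRing R]

/-- Auxiliary chase: injectivity of `f ⊗ id M` from a flat presentation `F ↠ M`. -/
theorem rTensor_injective_aux
    {A B : Type*} [AddCommGroup A] [AddCommGroup B] [Module R A] [Module R B]
    (f : A →ₗ[R] B) (hf : Function.Injective f)
    (hQ : Module.Flat R (B ⧸ LinearMap.range f))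
    (M : Type*) [AddCommGroup M] [Module R M]
    (F : Type*) [AddCommGroup F] [Module R F] [Module.Flat R F]
    (p : F →ₗ[R] M) (hpsurj : Function.Surjective p) :
    Function.Injective (LinearMap.rTensor M f) := by
  haveI := hQ
  set κ : LinearMap.ker p →ₗ[R] F := (LinearMap.ker p).subtype with hκdef
  set π : B →ₗ[R] B ⧸ LinearMap.range f := (LinearMap.range f).mkQ with hπdef
  rw [← LinearMap.ker_eq_bot, eq_bot_iff]
  intro x hx
  rw [LinearMap.mem_ker] at hx
  rw [Submodule.mem_bot]
  obtain ⟨a, ha⟩ := LinearMap.lTensor_surjective A hpsurj x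
  have h1 : LinearMap.lTensor B p (LinearMap.rTensor F f a) = 0 := by
    have e1 := LinearMap.congr_fun (LinearMap.lTensor_comp_rTensor (f := f) (g := p)) a
    have e2 := LinearMap.congr_fun (LinearMap.rTensor_comp_lTensor (f := f) (g := p)) a
    simp only [LinearMap.coe_comp, Function.comp_apply] at e1 e2
    rw [e1, ← e2, ha, hx]
  have hexactK : Function.Exact κ p := LinearMap.exact_subtype_ker_map p
  obtain ⟨k, hk⟩ := (lTensor_exact (R := R) B hexactK hpsurj
    (LinearMap.rTensor F f a)).mp h1
  have hπf : π ∘ₗ f = 0 := by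
    ext y
    simp [hπdef, Submodule.Quotient.mk_eq_zero]
  have h2 : LinearMap.rTensor (LinearMap.ker p) π k = 0 := by
    have hinj : Function.Injective
        (LinearMap.lTensor (B ⧸ LinearMap.range f) κ) :=
      Module.Flat.lTensor_preserves_injective_linearMap κ (Submodule.injective_subtype _)
    apply hinj
    rw [map_zero]
    calc LinearMap.lTensor _ κ (LinearMap.rTensor _ π k)
        = LinearMap.rTensor F π (LinearMap.lTensor B κ k) := by
          rw [← LinearMap.comp_apply, LinearMap.lTensor_comp_rTensor,
            ← LinearMap.rTensor_comp_lTensor, LinearMap.comp_apply]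
      _ = LinearMap.rTensor F π (LinearMap.rTensor F f a) := by rw [hk]
      _ = 0 := by
          rw [← LinearMap.comp_apply, ← LinearMap.rTensor_comp, hπf, LinearMap.rTensor_zero,
            LinearMap.zero_apply]
  obtain ⟨a', ha'⟩ :=
    ((rTensor_exact (R := R) (LinearMap.ker p) (LinearMap.exact_map_mkQ_range f)
      (Submodule.mkQ_surjective _)) k).mp h2
  have h3 : LinearMap.rTensor F f (LinearMap.lTensor A κ a') =
      LinearMap.rTensor F f a := by
    calc LinearMap.rTensor F f (LinearMap.lTensor A κ a')
        = LinearMap.lTensor B κ (LinearMap.rTensor (LinearMap.ker p) f a') := by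
          rw [← LinearMap.comp_apply, LinearMap.rTensor_comp_lTensor,
            ← LinearMap.lTensor_comp_rTensor, LinearMap.comp_apply]
      _ = LinearMap.rTensor F f a := by rw [ha', hk]
  have hfinj : Function.Injective (LinearMap.rTensor F f) :=
    Module.Flat.rTensor_preserves_injective_linearMap f hf
  have h4 : LinearMap.lTensor A κ a' = a := hfinj h3
  have hpκ : p ∘ₗ κ = 0 := by
    ext y
    exact y.2
  rw [← ha, ← h4, ← LinearMap.comp_apply, ← LinearMap.lTensor_comp, hpκ,
    LinearMap.lTensor_zero, LinearMap.zero_apply]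

/-- If `f : A →ₗ[R] B` is injective with flat cokernel, then `f ⊗ id M` is injective
for every module `M` (Tor₁ vanishing for flat modules). -/
theorem rTensor_injective_of_flat_quotient
    {A B : Type*} [AddCommGroup A] [AddCommGroup B] [Module R A] [Module R B]
    (f : A →ₗ[R] B) (hf : Function.Injective f)
    (hQ : Module.Flat R (B ⧸ LinearMap.range f))
    (M : Type*) [AddCommGroup M] [Module R M] :
    Function.Injective (LinearMap.rTensor M f) :=
  rTensor_injective_aux f hf hQ M (M →₀ R) (Finsupp.linearCombination R _root_.id)
    (Finsupp.linearCombination_id_surjective R M)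

/-- If `f : A →ₗ[R] B` is injective with `B` and `B ⧸ range f` flat, then `A` is flat. -/
theorem flat_of_injective_of_flat_of_flat_quotient
    {A B : Type*} [AddCommGroup A] [AddCommGroup B] [Module R A] [Module R B]
    (f : A →ₗ[R] B) (hf : Function.Injective f)
    (hB : Module.Flat R B) (hQ : Module.Flat R (B ⧸ LinearMap.range f)) :
    Module.Flat R A := by
  haveI := hB
  rw [Module.Flat.iff_lTensor_preserves_injective_linearMap]
  intro N N' _ _ _ _ g hg
  have h1 : Function.Injective (LinearMap.rTensor N f) :=
    rTensor_injective_of_flat_quotient f hf hQ N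
  have h2 : Function.Injective (LinearMap.lTensor B g) :=
    Module.Flat.lTensor_preserves_injective_linearMap g hg
  intro x y hxy
  apply h1
  have hnat : ∀ z, LinearMap.lTensor B g (LinearMap.rTensor N f z) =
      LinearMap.rTensor N' f (LinearMap.lTensor A g z) := fun z => by
    rw [← LinearMap.comp_apply, LinearMap.lTensor_comp_rTensor,
      ← LinearMap.rTensor_comp_lTensor, LinearMap.comp_apply]
  apply h2
  rw [hnat, hnat, hxy]

/-- Downward induction on the integers, starting from a bound. -/
theorem int_downward_induction {P : ℤ → Prop} (N : ℤ)
    (base : ∀ i, N ≤ i → P i) (step : ∀ i, P (i + 1) → P i) (i : ℤ) : P i := by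
  have key : ∀ n : ℕ, ∀ j : ℤ, N - n ≤ j → P j := by
    intro n
    induction n with
    | zero => intro j hj; exact base j (by omega)
    | succ m ih =>
      intro j _
      by_cases h : N - m ≤ j
      · exact ih j h
      · exact step j (ih (j + 1) (by omega))
  exact key (N - i).toNat i (by omega)

end Statement4Aux

/-- The cohomology of a cochain complex `(C, d)` at the spot `j + 1`:
`ker (d (j+1)) / im (d j)`. -/
abbrev CohomologyAt {R : Type*} [CommRing R] {C : ℤ → Type*} [∀ i, AddCommGroup (C i)]
    [∀ i, Module R (C i)] (d : ∀ i, C i →ₗ[R] C (i + 1)) (j : ℤ) : Type _ :=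
  ↥(LinearMap.ker (d (j + 1))) ⧸
    Submodule.comap (LinearMap.ker (d (j + 1))).subtype (LinearMap.range (d j))

/-- Let `C•` be a bounded cochain complex of flat modules over a
commutative ring `R` whose cohomology modules are all flat.  Then for every `R`-module
`M` and every spot, the natural comparison between `H^{j+1}(C•) ⊗_R M` and
`H^{j+1}(C• ⊗_R M)` is an isomorphism. -/
theorem statement4 (R : Type*) [CommRing R]
    (C : ℤ → Type*) [∀ i, AddCommGroup (C i)] [∀ i, Module R (C i)]
    (d : ∀ i, C i →ₗ[R] C (i + 1))
    (hdd : ∀ i, (d (i + 1)).comp (d i) = 0)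
    (hbounded : ∃ N : ℕ, ∀ i : ℤ, ((i : ℤ) < -(N : ℤ) ∨ (N : ℤ) < i) → Subsingleton (C i))
    (hflatC : ∀ i, Module.Flat R (C i))
    (hflatH : ∀ j : ℤ, Module.Flat R (CohomologyAt d j))
    (M : Type*) [AddCommGroup M] [Module R M] (j : ℤ) :
    Nonempty
      (CohomologyAt d j ⊗[R] M ≃ₗ[R]
        CohomologyAt (fun i => LinearMap.rTensor M (d i)) j) := by
  classical
  obtain ⟨N, hN⟩ := hbounded
  have hle : ∀ i : ℤ, LinearMap.range (d i) ≤ LinearMap.ker (d (i + 1)) := by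
    intro i
    rintro _ ⟨y, rfl⟩
    simpa [LinearMap.mem_ker] using LinearMap.congr_fun (hdd i) y
  -- Step A: flatness of images (and kernels) of the differentials, by downward induction.
  have hB : ∀ i : ℤ, Module.Flat R (LinearMap.range (d i)) := by
    refine Statement4Aux.int_downward_induction (P := fun i => Module.Flat R (LinearMap.range (d i)))
      (N : ℤ) ?_ ?_
    · intro i hi
      haveI : Subsingleton (C (i + 1)) := hN (i + 1) (Or.inr (by omega))
      infer_instance
    · intro i hi
      have hker : Module.Flat R (LinearMap.ker (d (i + 1))) := by
        refine Statement4Aux.flat_of_injective_of_flat_of_flat_quotient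
          (LinearMap.ker (d (i + 1))).subtype (Submodule.injective_subtype _) (hflatC (i + 1)) ?_
        rw [Submodule.range_subtype]
        haveI := hi
        exact Module.Flat.of_linearEquiv ((d (i + 1)).quotKerEquivRange)
      refine Statement4Aux.flat_of_injective_of_flat_of_flat_quotient
        (Submodule.inclusion (hle i)) (Submodule.inclusion_injective _) hker ?_
      rw [Submodule.range_inclusion]
      exact hflatH i
  -- Injectivity of tensored inclusions.
  have hinj_ker : ∀ i : ℤ,
      Function.Injective (LinearMap.rTensor M (LinearMap.ker (d i)).subtype) := by
    intro i
    refine Statement4Aux.rTensor_injective_of_flat_quotient _ (Submodule.injective_subtype _) ?_ M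
    rw [Submodule.range_subtype]
    haveI := hB i
    exact Module.Flat.of_linearEquiv ((d i).quotKerEquivRange)
  have hinj_incl : ∀ i : ℤ,
      Function.Injective (LinearMap.rTensor M (Submodule.inclusion (hle i))) := by
    intro i
    refine Statement4Aux.rTensor_injective_of_flat_quotient _
      (Submodule.inclusion_injective _) ?_ M
    rw [Submodule.range_inclusion]
    exact hflatH i
  have hinj_range : ∀ i : ℤ,
      Function.Injective (LinearMap.rTensor M (LinearMap.range (d i)).subtype) := by
    intro i
    rw [← Submodule.subtype_comp_inclusion _ _ (hle i), LinearMap.rTensor_comp,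
      LinearMap.coe_comp]
    exact (hinj_ker (i + 1)).comp (hinj_incl i)
  -- Step B: compute the tensored cohomology at spot `j`.
  -- the corestriction of `d j` to `Z := ker (d (j+1))`
  have hdj : ∀ x, d j x ∈ LinearMap.ker (d (j + 1)) := fun x => by
    simpa [LinearMap.mem_ker] using LinearMap.congr_fun (hdd j) x
  let e : C j →ₗ[R] LinearMap.ker (d (j + 1)) := LinearMap.codRestrict _ (d j) hdj
  have hdj_fact : d j = (LinearMap.ker (d (j + 1))).subtype ∘ₗ e := by ext x; rfl
  have hcomap : Submodule.comap (LinearMap.ker (d (j + 1))).subtype (LinearMap.range (d j)) =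
      LinearMap.range e := by
    ext x
    simp only [Submodule.mem_comap, LinearMap.mem_range]
    constructor
    · rintro ⟨y, hy⟩
      exact ⟨y, Subtype.ext hy⟩
    · rintro ⟨y, rfl⟩
      exact ⟨y, rfl⟩
  -- the first equivalence: `H ⊗ M ≃ (Z ⊗ M) ⧸ range (e ⊗ id)`
  let equiv0 : (CohomologyAt d j) ⊗[R] M ≃ₗ[R]
      ((LinearMap.ker (d (j + 1)) ⧸ LinearMap.range e) ⊗[R] M) :=
    TensorProduct.congr (Submodule.quotEquivOfEq _ _ hcomap) (LinearEquiv.refl R M)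
  let equiv1 : ((LinearMap.ker (d (j + 1)) ⊗[R] M) ⧸
        LinearMap.range (LinearMap.rTensor M e)) ≃ₗ[R]
      ((LinearMap.ker (d (j + 1)) ⧸ LinearMap.range e) ⊗[R] M) :=
    rTensor.equiv (R := R) M (LinearMap.exact_map_mkQ_range e) (Submodule.mkQ_surjective _)
  -- kernel of the tensored differential
  have hkerD : LinearMap.ker (LinearMap.rTensor M (d (j + 1))) =
      LinearMap.range (LinearMap.rTensor M (LinearMap.ker (d (j + 1))).subtype) := by
    have hfact : (LinearMap.range (d (j + 1))).subtype ∘ₗ (d (j + 1)).rangeRestrict =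
        d (j + 1) := by ext x; rfl
    have hexact : Function.Exact (LinearMap.ker (d (j + 1))).subtype
        (d (j + 1)).rangeRestrict := by
      rw [LinearMap.exact_iff, LinearMap.ker_rangeRestrict, Submodule.range_subtype]
    have h5 := rTensor_exact (R := R) M hexact (d (j + 1)).surjective_rangeRestrict
    rw [← hfact, LinearMap.rTensor_comp, LinearMap.ker_comp_of_ker_eq_bot, ← LinearMap.exact_iff]
    · exact h5
    · rw [LinearMap.ker_eq_bot]
      exact hinj_range (j + 1)
  -- the equivalence `Z ⊗ M ≃ ker (d (j+1) ⊗ id)`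
  have hmem : ∀ x, LinearMap.rTensor M (LinearMap.ker (d (j + 1))).subtype x ∈
      LinearMap.ker (LinearMap.rTensor M (d (j + 1))) := fun x => by
    rw [hkerD]
    exact LinearMap.mem_range_self _ x
  let f1 : (LinearMap.ker (d (j + 1)) ⊗[R] M) →ₗ[R]
      LinearMap.ker (LinearMap.rTensor M (d (j + 1))) :=
    LinearMap.codRestrict _ (LinearMap.rTensor M (LinearMap.ker (d (j + 1))).subtype) hmem
  have hf1 : ∀ x, (f1 x : C (j + 1) ⊗[R] M) =
      LinearMap.rTensor M (LinearMap.ker (d (j + 1))).subtype x := fun x => rfl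
  have hf1inj : Function.Injective f1 := by
    intro x y hxy
    apply hinj_ker (j + 1)
    rw [← hf1, ← hf1, hxy]
  have hf1surj : Function.Surjective f1 := by
    rintro ⟨y, hy⟩
    rw [hkerD] at hy
    obtain ⟨x, hx⟩ := hy
    exact ⟨x, Subtype.ext hx⟩
  let f1e := LinearEquiv.ofBijective f1 ⟨hf1inj, hf1surj⟩
  have hrTdj : LinearMap.rTensor M (d j) =
      (LinearMap.rTensor M (LinearMap.ker (d (j + 1))).subtype) ∘ₗ LinearMap.rTensor M e := by
    rw [← LinearMap.rTensor_comp, ← hdj_fact]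
  have hmap : Submodule.map (f1e : (LinearMap.ker (d (j + 1)) ⊗[R] M) →ₗ[R]
        LinearMap.ker (LinearMap.rTensor M (d (j + 1)))) (LinearMap.range (LinearMap.rTensor M e)) =
      Submodule.comap (LinearMap.ker (LinearMap.rTensor M (d (j + 1)))).subtype
        (LinearMap.range (LinearMap.rTensor M (d j))) := by
    ext y
    simp only [Submodule.mem_map, Submodule.mem_comap, LinearMap.mem_range]
    constructor
    · rintro ⟨x, ⟨w, rfl⟩, rfl⟩
      refine ⟨w, ?_⟩
      rw [hrTdj]
      rfl
    · rintro ⟨w, hw⟩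
      refine ⟨LinearMap.rTensor M e w, ⟨w, rfl⟩, ?_⟩
      apply Subtype.ext
      show (f1 (LinearMap.rTensor M e w) : C (j + 1) ⊗[R] M) = (y : C (j + 1) ⊗[R] M)
      rw [hf1, ← LinearMap.comp_apply, ← hrTdj]
      exact hw
  let equiv2 := Submodule.Quotient.equiv (LinearMap.range (LinearMap.rTensor M e)) _ f1e hmap
  exact ⟨equiv0.trans (equiv1.symm.trans equiv2)⟩
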